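/- For any clustering V = C_1 ∪ ... ∪ C_k and group partition V = V_1 ∪ ... ∪ V_h (all intersections V_s ∩ C_ℓ non-empty), min_ℓ Balance(C_ℓ) ≤ min_{s≠s'} |V_s|/|V_{s'}|, where Balance(C_ℓ) = min_{s≠s'} |V_s ∩ C_ℓ|/|V_{s'} ∩ C_ℓ|. -/
import Mathlib


open Matrix

lemma mediant_aux {k : ℕ} (hkne : (Finset.univ : Finset (Fin k)).Nonempty)
    (a b : Fin k → ℝ) (hb : ∀ l, 0 < b l) :
    ∃ l : Fin k, a l / b l ≤ (∑ l, a l) / (∑ l, b l) := by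
  by_contra hcon
  push_neg at hcon
  have hsb : 0 < ∑ l, b l := Finset.sum_pos (fun l _ => hb l) hkne
  have key : ∀ l : Fin k, (∑ l, a l) * b l < a l * (∑ l, b l) := by
    intro l
    have := hcon l
    rw [div_lt_div_iff₀ hsb (hb l)] at this
    linarith
  have := Finset.sum_lt_sum_of_nonempty hkne (fun l _ => key l)
  rw [← Finset.mul_sum, ← Finset.sum_mul] at this
  linarith [mul_comm (∑ l, a l) (∑ l, b l)]

theorem stmt15 (n k h : ℕ) (hh : 1 < h)
    (c : Fin n → Fin k) (g : Fin n → Fin h)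
    (hne : ∀ (s : Fin h) (l : Fin k),
      ((Finset.univ.filter fun i => g i = s ∧ c i = l)).Nonempty)
    (hkne : (Finset.univ : Finset (Fin k)).Nonempty)
    (pairs : Finset (Fin h × Fin h))
    (hpairs : pairs = Finset.univ.filter fun p => p.1 ≠ p.2)
    (hpne : pairs.Nonempty)
    (balance : Fin k → ℝ)
    (hbal : ∀ l, balance l = pairs.inf' hpne fun p =>
      ((Finset.univ.filter fun i => g i = p.1 ∧ c i = l).card : ℝ) /
      ((Finset.univ.filter fun i => g i = p.2 ∧ c i = l).card : ℝ)) :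
    Finset.univ.inf' hkne balance ≤ pairs.inf' hpne fun p =>
      ((Finset.univ.filter fun i => g i = p.1).card : ℝ) /
      ((Finset.univ.filter fun i => g i = p.2).card : ℝ) := by
  apply Finset.le_inf'
  intro p hp
  set a : Fin k → ℝ := fun l =>
    ((Finset.univ.filter fun i => g i = p.1 ∧ c i = l).card : ℝ) with ha
  set b : Fin k → ℝ := fun l =>
    ((Finset.univ.filter fun i => g i = p.2 ∧ c i = l).card : ℝ) with hbdef
  have hb : ∀ l, 0 < b l := fun l => by
    simpa [hbdef] using Finset.card_pos.mpr (hne p.2 l)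
  obtain ⟨l, hl⟩ := mediant_aux hkne a b hb
  have hsum : ∀ (s : Fin h),
      ((Finset.univ.filter fun i => g i = s).card : ℝ) =
      ∑ l : Fin k, ((Finset.univ.filter fun i => g i = s ∧ c i = l).card : ℝ) := by
    intro s
    have : (Finset.univ.filter fun i => g i = s).card =
        ∑ l : Fin k, (Finset.univ.filter fun i => g i = s ∧ c i = l).card := by
      rw [Finset.card_eq_sum_card_fiberwise
        (f := c) (t := Finset.univ) (fun i _ => Finset.mem_univ _)]
      apply Finset.sum_congr rfl
      intro l _
      congr 1
      ext i
      simp [Finset.mem_filter, and_comm]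
    rw [this]
    push_cast
    rfl
  calc Finset.univ.inf' hkne balance ≤ balance l := Finset.inf'_le _ (Finset.mem_univ l)
    _ ≤ a l / b l := by rw [hbal l]; exact Finset.inf'_le _ hp
    _ ≤ (∑ l, a l) / (∑ l, b l) := hl
    _ = _ := by rw [hsum p.1, hsum p.2]
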